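/- For the 10-vertex bipartite graph G with red edges R as specified, the point y ∈ R^E with y_e = 2/3 for e = {v_1,v_6} and y_e = 1/3 for all other edges satisfies all degree constraints y(δ(v)) = 1 and all label constraints y(E_L) ≥ 1 for L ∈ L_all(G), yet y is not a convex combination of incidence vectors of odd-red perfect matchings. Hence the label constraint relaxation strictly contains the odd-red perfect matching polytope. -/

import Mathlib

open SimpleGraph

open scoped Classical

/-- The edge set of the example graph: vertices `0,…,9` stand for `v_1,…,v_10`. -/
def exEdges : Set (Sym2 (Fin 10)) :=
  {s(0, 5), s(0, 6), s(1, 5), s(1, 6), s(1, 7), s(2, 6), s(2, 8), s(2, 9),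
   s(3, 7), s(3, 8), s(3, 9), s(4, 7), s(4, 8), s(4, 9)}

/-- The example bipartite graph on ten vertices. -/
def exG : SimpleGraph (Fin 10) := SimpleGraph.fromEdgeSet exEdges

/-- The red edges `{v_2,v_7}, {v_4,v_9}, {v_5,v_10}` of the example graph. -/
def exR : Set (Sym2 (Fin 10)) := {s(1, 6), s(3, 8), s(4, 9)}

/-- The point `y`: value `2/3` on the edge `{v_1, v_6}`, value `1/3` on every other
edge of the graph, and `0` on non-edges. -/
noncomputable def yPt : Sym2 (Fin 10) → ℝ := fun e =>
  if e = s(0, 5) then 2 / 3 else if e ∈ exEdges then 1 / 3 else 0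

/-- The label-constraint edge set `E_L` of a labeling `L`. -/
def labelSet (L : Fin 10 → Bool) : Set (Sym2 (Fin 10)) :=
  {e | e ∈ exEdges ∧ ∃ a b : Fin 10, e = s(a, b) ∧
      ((e ∉ exR ∧ L a = L b) ∨ (e ∈ exR ∧ L a ≠ L b))}

/-- The graph edges as a finite set. -/
def EF : Finset (Sym2 (Fin 10)) :=
  {s(0, 5), s(0, 6), s(1, 5), s(1, 6), s(1, 7), s(2, 6), s(2, 8), s(2, 9),
   s(3, 7), s(3, 8), s(3, 9), s(4, 7), s(4, 8), s(4, 9)}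

/-- The red edges as a finite set. -/
def RF : Finset (Sym2 (Fin 10)) := {s(1, 6), s(3, 8), s(4, 9)}

lemma mem_EF_iff (e : Sym2 (Fin 10)) : e ∈ EF ↔ e ∈ exEdges := by
  simp only [EF, exEdges, Finset.mem_insert, Finset.mem_singleton,
    Set.mem_insert_iff, Set.mem_singleton_iff]

lemma mem_RF_iff (e : Sym2 (Fin 10)) : e ∈ RF ↔ e ∈ exR := by
  simp only [RF, exR, Finset.mem_insert, Finset.mem_singleton,
    Set.mem_insert_iff, Set.mem_singleton_iff]

lemma yOther (e : Sym2 (Fin 10)) (h1 : e ≠ s(0,5)) (h2 : e ∈ EF) : yPt e = 1/3 := by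
  rw [yPt, if_neg h1, if_pos ((mem_EF_iff e).1 h2)]

lemma yA : yPt s(0,5) = 2/3 := if_pos rfl
lemma yB : yPt s(0,6) = 1/3 := yOther _ (by decide) (by decide)
lemma yC : yPt s(1,5) = 1/3 := yOther _ (by decide) (by decide)
lemma yD : yPt s(1,6) = 1/3 := yOther _ (by decide) (by decide)
lemma yE : yPt s(1,7) = 1/3 := yOther _ (by decide) (by decide)
lemma yF : yPt s(2,6) = 1/3 := yOther _ (by decide) (by decide)
lemma yG : yPt s(2,8) = 1/3 := yOther _ (by decide) (by decide)
lemma yH : yPt s(2,9) = 1/3 := yOther _ (by decide) (by decide)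
lemma yI : yPt s(3,7) = 1/3 := yOther _ (by decide) (by decide)
lemma yJ : yPt s(3,8) = 1/3 := yOther _ (by decide) (by decide)
lemma yK : yPt s(3,9) = 1/3 := yOther _ (by decide) (by decide)
lemma yL : yPt s(4,7) = 1/3 := yOther _ (by decide) (by decide)
lemma yM : yPt s(4,8) = 1/3 := yOther _ (by decide) (by decide)
lemma yN : yPt s(4,9) = 1/3 := yOther _ (by decide) (by decide)

lemma sumEF (v : Fin 10) : ∑ e ∈ EF, (if v ∈ e then yPt e else 0) =
    (if v ∈ s(0,5) then yPt s(0,5) else 0) + (if v ∈ s(0,6) then yPt s(0,6) else 0)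
    + (if v ∈ s(1,5) then yPt s(1,5) else 0) + (if v ∈ s(1,6) then yPt s(1,6) else 0)
    + (if v ∈ s(1,7) then yPt s(1,7) else 0) + (if v ∈ s(2,6) then yPt s(2,6) else 0)
    + (if v ∈ s(2,8) then yPt s(2,8) else 0) + (if v ∈ s(2,9) then yPt s(2,9) else 0)
    + (if v ∈ s(3,7) then yPt s(3,7) else 0) + (if v ∈ s(3,8) then yPt s(3,8) else 0)
    + (if v ∈ s(3,9) then yPt s(3,9) else 0) + (if v ∈ s(4,7) then yPt s(4,7) else 0)
    + (if v ∈ s(4,8) then yPt s(4,8) else 0) + (if v ∈ s(4,9) then yPt s(4,9) else 0) := by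
  rw [show EF = {s(0, 5), s(0, 6), s(1, 5), s(1, 6), s(1, 7), s(2, 6), s(2, 8), s(2, 9),
   s(3, 7), s(3, 8), s(3, 9), s(4, 7), s(4, 8), s(4, 9)} from rfl]
  rw [Finset.sum_insert (by decide), Finset.sum_insert (by decide),
    Finset.sum_insert (by decide), Finset.sum_insert (by decide),
    Finset.sum_insert (by decide), Finset.sum_insert (by decide),
    Finset.sum_insert (by decide), Finset.sum_insert (by decide),
    Finset.sum_insert (by decide), Finset.sum_insert (by decide),
    Finset.sum_insert (by decide), Finset.sum_insert (by decide),
    Finset.sum_insert (by decide), Finset.sum_singleton]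
  ring

lemma part1 (v : Fin 10) : ∑ e : Sym2 (Fin 10), (if v ∈ e then yPt e else 0) = 1 := by
  rw [← Finset.sum_subset (Finset.subset_univ EF)]
  · rw [sumEF, yA, yB, yC, yD, yE, yF, yG, yH, yI, yJ, yK, yL, yM, yN]
    fin_cases v <;> · simp [Sym2.mem_iff]
                      norm_num
  · intro e _ he
    rw [mem_EF_iff] at he
    have h5 : e ≠ s(0,5) := fun h => he (h ▸ by simp [exEdges])
    simp [yPt, he, h5]

def balB (L : Fin 10 → Bool) : Sym2 (Fin 10) → Bool :=
  Sym2.lift ⟨fun a b => L a == L b, fun a b => by simp [Bool.beq_comm]⟩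

def wN : Sym2 (Fin 10) → ℕ := fun e => if e = s(0,5) then 2 else 1

def lF (L : Fin 10 → Bool) : Finset (Sym2 (Fin 10)) :=
  EF.filter (fun e => (e ∉ RF ∧ balB L e = true) ∨ (e ∈ RF ∧ ¬ balB L e = true))

lemma labelSet_eq (L : Fin 10 → Bool) : labelSet L = ↑(lF L) := by
  ext e
  induction e using Sym2.inductionOn with
  | hf x y =>
    simp only [labelSet, Set.mem_setOf_eq, lF, Finset.coe_filter, mem_EF_iff, mem_RF_iff,
      balB, Sym2.lift_mk, beq_iff_eq]
    constructor
    · rintro ⟨he, a, b, hab, h⟩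
      refine ⟨he, ?_⟩
      rcases Sym2.eq_iff.mp hab with ⟨h1, h2⟩ | ⟨h1, h2⟩
      · subst h1; subst h2; rw [← hab] at h; tauto
      · subst h1; subst h2
        rcases h with ⟨h3, h4⟩ | ⟨h3, h4⟩
        · exact Or.inl ⟨h3, h4.symm⟩
        · exact Or.inr ⟨h3, fun hc => h4 hc.symm⟩
    · rintro ⟨he, h⟩
      exact ⟨he, x, y, rfl, by tauto⟩

def score (b0 b1 b2 b3 b4 b5 b6 b7 b8 b9 : Bool) : ℕ :=
  (if b0 == b5 then 2 else 0) + (if b0 == b6 then 1 else 0) + (if b1 == b5 then 1 else 0)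
  + (if !(b1 == b6) then 1 else 0) + (if b1 == b7 then 1 else 0) + (if b2 == b6 then 1 else 0)
  + (if b2 == b8 then 1 else 0) + (if b2 == b9 then 1 else 0) + (if b3 == b7 then 1 else 0)
  + (if !(b3 == b8) then 1 else 0) + (if b3 == b9 then 1 else 0) + (if b4 == b7 then 1 else 0)
  + (if b4 == b8 then 1 else 0) + (if !(b4 == b9) then 1 else 0)

def cnt (b0 b1 b2 b3 b4 b5 b6 b7 b8 b9 : Bool) : ℕ :=
  (if b0 then 1 else 0) + (if b1 then 1 else 0) + (if b2 then 1 else 0) + (if b3 then 1 else 0)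
  + (if b4 then 1 else 0) + (if b5 then 1 else 0) + (if b6 then 1 else 0) + (if b7 then 1 else 0)
  + (if b8 then 1 else 0) + (if b9 then 1 else 0)

set_option maxHeartbeats 1000000 in
lemma claim : ∀ b0 b1 b2 b3 b4 b5 b6 b7 b8 b9 : Bool,
    cnt b0 b1 b2 b3 b4 b5 b6 b7 b8 b9 % 2 = 0 → 3 ≤ score b0 b1 b2 b3 b4 b5 b6 b7 b8 b9 := by
  decide

lemma sum_lF (L : Fin 10 → Bool) :
    ∑ e ∈ lF L, wN e = score (L 0) (L 1) (L 2) (L 3) (L 4) (L 5) (L 6) (L 7) (L 8) (L 9) := by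
  rw [lF, Finset.sum_filter]
  rw [show EF = {s(0, 5), s(0, 6), s(1, 5), s(1, 6), s(1, 7), s(2, 6), s(2, 8), s(2, 9),
   s(3, 7), s(3, 8), s(3, 9), s(4, 7), s(4, 8), s(4, 9)} from rfl]
  rw [Finset.sum_insert (by decide), Finset.sum_insert (by decide),
    Finset.sum_insert (by decide), Finset.sum_insert (by decide),
    Finset.sum_insert (by decide), Finset.sum_insert (by decide),
    Finset.sum_insert (by decide), Finset.sum_insert (by decide),
    Finset.sum_insert (by decide), Finset.sum_insert (by decide),
    Finset.sum_insert (by decide), Finset.sum_insert (by decide),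
    Finset.sum_insert (by decide), Finset.sum_singleton]
  simp [balB, wN, RF, score]
  ring

lemma yEq (e : Sym2 (Fin 10)) (he : e ∈ EF) : yPt e = (wN e : ℝ) / 3 := by
  by_cases h : e = s(0,5)
  · simp [yPt, wN, h]
  · rw [yPt, wN, if_neg h, if_neg h, if_pos ((mem_EF_iff e).1 he)]
    norm_num

lemma part2 (L : Fin 10 → Bool) (hL : Even {v | L v = true}.ncard) :
    1 ≤ ∑ᶠ e ∈ labelSet L, yPt e := by
  rw [labelSet_eq, finsum_mem_coe_finset]
  have h1 : ∑ e ∈ lF L, yPt e = ((∑ e ∈ lF L, wN e : ℕ) : ℝ) / 3 := by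
    rw [Nat.cast_sum, Finset.sum_div]
    exact Finset.sum_congr rfl fun e he => yEq e (Finset.mem_filter.mp he).1
  rw [h1, sum_lF]
  have h2 : cnt (L 0) (L 1) (L 2) (L 3) (L 4) (L 5) (L 6) (L 7) (L 8) (L 9) % 2 = 0 := by
    have h3 : {v | L v = true}.ncard
        = cnt (L 0) (L 1) (L 2) (L 3) (L 4) (L 5) (L 6) (L 7) (L 8) (L 9) := by
      rw [Set.ncard_eq_toFinset_card', Set.toFinset_setOf, Finset.card_filter]
      have h : ∀ f : Fin 10 → ℕ, ∑ v : Fin 10, f v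
          = f 0 + (f 1 + (f 2 + (f 3 + (f 4 + (f 5 + (f 6 + (f 7 + (f 8 + (f 9 + 0))))))))) := by
        intro f
        simp only [Fin.sum_univ_succ, Fin.sum_univ_zero]
        rfl
      rw [h, cnt]
      ring
    rw [← Nat.even_iff, ← h3]
    exact hL
  have h4 := claim _ _ _ _ _ _ _ _ _ _ h2
  have h5 : (3 : ℝ) ≤ (score (L 0) (L 1) (L 2) (L 3) (L 4) (L 5) (L 6) (L 7) (L 8) (L 9) : ℕ) := by
    exact_mod_cast h4
  linarith

lemma adj_mem {v w : Fin 10} (h : exG.Adj v w) : s(v, w) ∈ exEdges := by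
  have h' : (SimpleGraph.fromEdgeSet exEdges).Adj v w := h
  exact ((SimpleGraph.fromEdgeSet_adj exEdges).mp h').1

lemma nb0 (w : Fin 10) (h : s((0:Fin 10), w) ∈ exEdges) : w = 5 ∨ w = 6 := by
  simp [exEdges, Sym2.eq_iff] at h; tauto
lemma nb1 (w : Fin 10) (h : s((1:Fin 10), w) ∈ exEdges) : w = 5 ∨ w = 6 ∨ w = 7 := by
  simp [exEdges, Sym2.eq_iff] at h; tauto
lemma nb3 (w : Fin 10) (h : s((3:Fin 10), w) ∈ exEdges) : w = 7 ∨ w = 8 ∨ w = 9 := by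
  simp [exEdges, Sym2.eq_iff] at h; tauto
lemma nb4 (w : Fin 10) (h : s((4:Fin 10), w) ∈ exEdges) : w = 7 ∨ w = 8 ∨ w = 9 := by
  simp [exEdges, Sym2.eq_iff] at h; tauto
lemma nb6 (w : Fin 10) (h : s((6:Fin 10), w) ∈ exEdges) : w = 0 ∨ w = 1 ∨ w = 2 := by
  simp [exEdges, Sym2.eq_iff] at h; tauto

lemma key (M : exG.Subgraph) (hM : M.IsPerfectMatching)
    (hodd : Odd ((M.edgeSet ∩ exR).ncard)) :
    (s((0:Fin 10), 5) ∈ M.edgeSet ↔ s((1:Fin 10), 6) ∈ M.edgeSet) := by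
  have hM' := Subgraph.isPerfectMatching_iff.mp hM
  simp only [Subgraph.mem_edgeSet]
  constructor
  · intro h05
    by_contra h16n
    obtain ⟨w1, hw1, _⟩ := hM' 1
    have hw1' := nb1 w1 (adj_mem (M.adj_sub hw1))
    have h17 : M.Adj 1 7 := by
      rcases hw1' with rfl | rfl | rfl
      · exact absurd ((hM' 5).unique (M.adj_symm hw1) (M.adj_symm h05)) (by decide)
      · exact absurd hw1 h16n
      · exact hw1
    obtain ⟨w6, hw6, _⟩ := hM' 6
    have hw6' := nb6 w6 (adj_mem (M.adj_sub hw6))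
    have h26 : M.Adj 2 6 := by
      rcases hw6' with rfl | rfl | rfl
      · exact absurd ((hM' 0).unique (M.adj_symm hw6) h05) (by decide)
      · exact absurd (M.adj_symm hw6) h16n
      · exact M.adj_symm hw6
    obtain ⟨w3, hw3, _⟩ := hM' 3
    have hw3' := nb3 w3 (adj_mem (M.adj_sub hw3))
    have hw3'' : w3 = 8 ∨ w3 = 9 := by
      rcases hw3' with rfl | rfl | rfl
      · exact absurd ((hM' 7).unique (M.adj_symm hw3) (M.adj_symm h17)) (by decide)
      · exact Or.inl rfl
      · exact Or.inr rfl
    obtain ⟨w4, hw4, _⟩ := hM' 4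
    have hw4' := nb4 w4 (adj_mem (M.adj_sub hw4))
    rcases hw3'' with rfl | rfl
    · have h49 : M.Adj 4 9 := by
        rcases hw4' with rfl | rfl | rfl
        · exact absurd ((hM' 7).unique (M.adj_symm hw4) (M.adj_symm h17)) (by decide)
        · exact absurd ((hM' 8).unique (M.adj_symm hw4) (M.adj_symm hw3)) (by decide)
        · exact hw4
      have hset : M.edgeSet ∩ exR = {s(3,8), s(4,9)} := by
        ext e
        simp only [Set.mem_inter_iff, exR, Set.mem_insert_iff, Set.mem_singleton_iff,
          Subgraph.mem_edgeSet]
        constructor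
        · rintro ⟨heM, rfl | rfl | rfl⟩
          · exact absurd (Subgraph.mem_edgeSet.mp heM) h16n
          · exact Or.inl rfl
          · exact Or.inr rfl
        · rintro (rfl | rfl)
          · exact ⟨Subgraph.mem_edgeSet.mpr hw3, Or.inr (Or.inl rfl)⟩
          · exact ⟨Subgraph.mem_edgeSet.mpr h49, Or.inr (Or.inr rfl)⟩
      rw [hset, Set.ncard_pair (by decide)] at hodd
      exact absurd hodd (by decide)
    · have h48 : M.Adj 4 8 := by
        rcases hw4' with rfl | rfl | rfl
        · exact absurd ((hM' 7).unique (M.adj_symm hw4) (M.adj_symm h17)) (by decide)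
        · exact hw4
        · exact absurd ((hM' 9).unique (M.adj_symm hw4) (M.adj_symm hw3)) (by decide)
      have hset : M.edgeSet ∩ exR = ∅ := by
        ext e
        simp only [Set.mem_inter_iff, exR, Set.mem_insert_iff, Set.mem_singleton_iff,
          Set.mem_empty_iff_false, iff_false, not_and]
        rintro heM (rfl | rfl | rfl)
        · exact absurd (Subgraph.mem_edgeSet.mp heM) h16n
        · exact absurd ((hM' 3).unique (Subgraph.mem_edgeSet.mp heM) hw3) (by decide)
        · exact absurd ((hM' 4).unique (Subgraph.mem_edgeSet.mp heM) h48) (by decide)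
      rw [hset, Set.ncard_empty] at hodd
      exact absurd hodd (by decide)
  · intro h16
    obtain ⟨w0, hw0, _⟩ := hM' 0
    have hw0' := nb0 w0 (adj_mem (M.adj_sub hw0))
    rcases hw0' with rfl | rfl
    · exact hw0
    · exact absurd ((hM' 6).unique (M.adj_symm hw0) (M.adj_symm h16)) (by decide)

lemma part3 : yPt ∉ convexHull ℝ {x : Sym2 (Fin 10) → ℝ |
    ∃ M : exG.Subgraph, M.IsPerfectMatching ∧ Odd ((M.edgeSet ∩ exR).ncard) ∧
      x = fun e => if e ∈ M.edgeSet then 1 else 0} := by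
  intro hmem
  have hconv : Convex ℝ {x : Sym2 (Fin 10) → ℝ | x s(0,5) = x s(1,6)} := by
    intro x hx y hy a b ha hb hab
    simp only [Set.mem_setOf_eq] at *
    simp [hx, hy]
  have hsub : {x : Sym2 (Fin 10) → ℝ |
      ∃ M : exG.Subgraph, M.IsPerfectMatching ∧ Odd ((M.edgeSet ∩ exR).ncard) ∧
        x = fun e => if e ∈ M.edgeSet then 1 else 0} ⊆
      {x : Sym2 (Fin 10) → ℝ | x s(0,5) = x s(1,6)} := by
    rintro x ⟨M, hM, hodd, rfl⟩
    simp only [Set.mem_setOf_eq, key M hM hodd]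
  have hthis := convexHull_min hsub hconv hmem
  simp only [Set.mem_setOf_eq] at hthis
  rw [yA, yD] at hthis
  norm_num at hthis



/-- The point `y` satisfies all degree constraints and all label constraints, yet is
not a convex combination of incidence vectors of odd-red perfect matchings: the label
constraint relaxation strictly contains the odd-red perfect matching polytope. -/

theorem stmt_15 :
    (∀ v : Fin 10, ∑ e : Sym2 (Fin 10), (if v ∈ e then yPt e else 0) = 1) ∧
    (∀ L : Fin 10 → Bool, Even {v | L v = true}.ncard →
      1 ≤ ∑ᶠ e ∈ labelSet L, yPt e) ∧
    yPt ∉ convexHull ℝ {x : Sym2 (Fin 10) → ℝ |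
      ∃ M : exG.Subgraph, M.IsPerfectMatching ∧ Odd (M.edgeSet ∩ exR).ncard ∧
        x = fun e => if e ∈ M.edgeSet then 1 else 0} := by
  exact ⟨part1, part2, part3⟩
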